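/- If Θ is an invertible positive-definite (hence self-adjoint) operator on a finite-dimensional complex Hilbert space and H satisfies H†Θ = ΘH, then every eigenvalue of H is real. -/

import Mathlib

open scoped Matrix ComplexOrder

theorem stmt_0 {N : ℕ} (H Th : Matrix (Fin N) (Fin N) ℂ)
    (hpos : Th.PosDef) (hinv : IsUnit Th)
    (hD : Hᴴ * Th = Th * H) :
    ∀ μ ∈ spectrum ℂ H, μ.im = 0 := by
  intro μ hμ
  rw [← AlgEquiv.spectrum_eq Matrix.toLinAlgEquiv',
    ← Module.End.hasEigenvalue_iff_mem_spectrum] at hμ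
  obtain ⟨v, hv, hv0⟩ := hμ.exists_hasEigenvector
  have hHv : H.mulVec v = μ • v := by
    simpa [Matrix.toLinAlgEquiv'_apply] using hv
  set c : ℂ := star v ⬝ᵥ Th.mulVec v with hc
  have hcpos : 0 < c := hpos.dotProduct_mulVec_pos hv0
  have key : μ * c = (starRingEnd ℂ) μ * c := by
    have h1 : star v ⬝ᵥ (Th * H).mulVec v = μ * c := by
      rw [← Matrix.mulVec_mulVec, hHv]
      simp [hc, Matrix.mulVec_smul, dotProduct_smul, mul_comm]
    have h2 : star v ⬝ᵥ (Hᴴ * Th).mulVec v = (starRingEnd ℂ) μ * c := by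
      rw [← Matrix.mulVec_mulVec, Matrix.dotProduct_mulVec, ← Matrix.star_mulVec, hHv]
      simp [hc, mul_comm, smul_dotProduct]
    rw [← h1, ← h2, hD]
  have hc0 : c ≠ 0 := ne_of_gt hcpos
  have : μ = (starRingEnd ℂ) μ := mul_right_cancel₀ hc0 key
  have := Complex.conj_eq_iff_im.mp this.symm
  exact this
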